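/- Suppose in addition that 𝒲 has dimension at most D for some D ∈ ℕ. Let V ⊆ 𝒲 be a UBS, and suppose V is almost-equivalent to a disjoint union ⋃_{i∈I} U_i of pairwise disjoint minimal UBSs and also almost-equivalent to a disjoint union ⋃_{i∈I'} U'_i of pairwise disjoint minimal UBSs. Then I and I' are finite of the same cardinality, and there is a bijection σ : I → I' such that U_i and U'_{σ(i)} are almost-equivalent for every i ∈ I. -/

import Mathlib

open Set

variable {X : Type*}

/-- A wall: a subset with nonempty complement and nonempty itself. -/
def IsWall (h : Set X) : Prop := h.Nonempty ∧ hᶜ.Nonempty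

/-- Walls `h` and `k` cross. -/
def Crosses (h k : Set X) : Prop :=
  (h ∩ k).Nonempty ∧ (h ∩ kᶜ).Nonempty ∧ (hᶜ ∩ k).Nonempty ∧ (hᶜ ∩ kᶜ).Nonempty

/-- The wall `u` lies in the halfspace `H` of the wall `w`. -/
def LiesIn (u H w : Set X) : Prop := u ≠ w ∧ (u ⊆ H ∨ uᶜ ⊆ H)

/-- The wall `w` separates the walls `u` and `v`. -/
def Separates (w u v : Set X) : Prop :=
  u ≠ v ∧ u ≠ w ∧ v ≠ w ∧
  ∃ u' v' w', (u' = u ∨ u' = uᶜ) ∧ (v' = v ∨ v' = vᶜ) ∧ (w' = w ∨ w' = wᶜ) ∧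
    u' ⊆ w' ∧ v' ⊆ w'ᶜ

/-- `S` contains a facing triple. -/
def HasFacingTriple (S : Set (Set X)) : Prop :=
  ∃ a ∈ S, ∃ b ∈ S, ∃ c ∈ S, a ≠ b ∧ a ≠ c ∧ b ≠ c ∧
    ∃ a' b' c', (a' = a ∨ a' = aᶜ) ∧ (b' = b ∨ b' = bᶜ) ∧ (c' = c ∨ c' = cᶜ) ∧
      Disjoint a' b' ∧ Disjoint a' c' ∧ Disjoint b' c'

/-- `S` is inseparable with respect to the wall collection `W`. -/
def InseparableIn (W S : Set (Set X)) : Prop :=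
  ∀ u ∈ S, ∀ v ∈ S, ∀ w ∈ W, Separates w u v → w ∈ S

/-- `S` is unidirectional: for each wall `w ∈ S`, at most one of the two halfspaces of `w`
contains infinitely many walls of `S`. -/
def Unidirectional (S : Set (Set X)) : Prop :=
  ∀ w ∈ S, {u ∈ S | LiesIn u w w}.Finite ∨ {u ∈ S | LiesIn u wᶜ w}.Finite

/-- `V` is a UBS in the wall collection `W`. -/
def IsUBS (W V : Set (Set X)) : Prop :=
  V ⊆ W ∧ V.Infinite ∧ InseparableIn W V ∧ Unidirectional V ∧ ¬ HasFacingTriple V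

/-- Almost-equivalence of sets of walls. -/
def AlmostEq (S T : Set (Set X)) : Prop := (S \ T).Finite ∧ (T \ S).Finite

/-- `U` is a minimal UBS in `W`. -/
def MinUBS (W U : Set (Set X)) : Prop :=
  IsUBS W U ∧ ∀ U', IsUBS W U' → U' ⊆ U → AlmostEq U' U

/-- `A ≺ B`: every wall of `B` crosses all but finitely many walls of `A`. -/
def Prec (A B : Set (Set X)) : Prop := ∀ b ∈ B, {a ∈ A | ¬ Crosses b a}.Finite

/-- Distinct members of `W` determine distinct partitions. -/
def Admissible (W : Set (Set X)) : Prop := ∀ h ∈ W, ∀ k ∈ W, h ≠ k → h ≠ kᶜ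

/-- No infinite subset of `W` consists of pairwise-crossing walls. -/
def NoInfCross (W : Set (Set X)) : Prop := ∀ S ⊆ W, S.Pairwise Crosses → S.Finite

/-- `W` has dimension at most `D`: every pairwise-crossing subset has cardinality at most `D`. -/
def DimLE (W : Set (Set X)) (D : ℕ) : Prop :=
  ∀ S ⊆ W, S.Pairwise Crosses → S.Finite ∧ S.ncard ≤ D

/-- `c` is a chain: an injective sequence of walls with `c n` separating `c (n-1)` and
`c (n+1)` for `n ≥ 1`. -/
def IsChainSeq (c : ℕ → Set X) : Prop :=
  Function.Injective c ∧ ∀ n, Separates (c (n + 1)) (c n) (c (n + 2))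

/-- The chain `c` is inextensible in `S`: no wall of `S` has a halfspace containing every
term of `c`. -/
def InextensibleIn (S : Set (Set X)) (c : ℕ → Set X) : Prop :=
  ¬ ∃ w ∈ S, ∃ H, (H = w ∨ H = wᶜ) ∧ ∀ n, LiesIn (c n) H w

/-- The inseparable closure in `W` of a set `C` of walls. -/
def insepClosure (W C : Set (Set X)) : Set (Set X) :=
  ⋂₀ {S | C ⊆ S ∧ S ⊆ W ∧ InseparableIn W S}


/-! ### Auxiliary lemmas -/

section Aux

lemma crosses_comm {h k : Set X} (hc : Crosses h k) : Crosses k h := by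
  obtain ⟨h1, h2, h3, h4⟩ := hc
  exact ⟨by rwa [Set.inter_comm], by rwa [Set.inter_comm], by rwa [Set.inter_comm],
    by rwa [Set.inter_comm]⟩

lemma crosses_ne {h k : Set X} (hc : Crosses h k) : h ≠ k := by
  rintro rfl
  exact absurd hc.2.1 (by simp)

lemma infinite_fiber {γ : Type} [Finite γ] {S : Set ℕ} (hS : S.Infinite) (f : ℕ → γ) :
    ∃ c, {n | n ∈ S ∧ f n = c}.Infinite := by
  by_contra h
  push_neg at h
  have hsub : S ⊆ ⋃ c : γ, {n | n ∈ S ∧ f n = c} := fun n hn => Set.mem_iUnion.2 ⟨f n, hn, rfl⟩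
  exact hS ((Set.finite_iUnion h).subset hsub)

variable {γ : Type} [Finite γ] [Nonempty γ]

open Classical in
/-- One step of the Ramsey construction. -/
noncomputable def rNext (C : ℕ → ℕ → γ) (T : Set ℕ) : Set ℕ :=
  if h : ∃ c, {y | y ∈ T ∧ sInf T < y ∧ C (sInf T) y = c}.Infinite then
    {y | y ∈ T ∧ sInf T < y ∧ C (sInf T) y = h.choose}
  else ∅

noncomputable def rIter (C : ℕ → ℕ → γ) (S : Set ℕ) : ℕ → Set ℕ
  | 0 => S
  | k + 1 => rNext C (rIter C S k)

lemma rNext_spec (C : ℕ → ℕ → γ) {T : Set ℕ} (hT : T.Infinite) :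
    (rNext C T).Infinite ∧ rNext C T ⊆ T ∧ (∀ y ∈ rNext C T, sInf T < y) ∧
      ∃ c, ∀ y ∈ rNext C T, C (sInf T) y = c := by
  have h1 : {y | y ∈ T ∧ sInf T < y}.Infinite := by
    have hsub : T \ {y | y ≤ sInf T} ⊆ {y | y ∈ T ∧ sInf T < y} := by
      intro y hy
      exact ⟨hy.1, lt_of_not_ge (fun h => hy.2 h)⟩
    exact (hT.diff (Set.finite_Iic (sInf T))).mono hsub
  obtain ⟨c, hc⟩ := infinite_fiber h1 (C (sInf T))
  have h : ∃ c, {y | y ∈ T ∧ sInf T < y ∧ C (sInf T) y = c}.Infinite := by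
    refine ⟨c, ?_⟩
    refine hc.mono ?_
    rintro n ⟨⟨hn1, hn2⟩, hn3⟩
    exact ⟨hn1, hn2, hn3⟩
  rw [rNext, dif_pos h]
  exact ⟨h.choose_spec, fun y hy => hy.1, fun y hy => hy.2.1, h.choose, fun y hy => hy.2.2⟩

/-- Infinite Ramsey theorem for pairs. -/
lemma ramsey_inf (C : ℕ → ℕ → γ) (S : Set ℕ) (hS : S.Infinite) :
    ∃ T ⊆ S, T.Infinite ∧ ∃ c, ∀ i ∈ T, ∀ j ∈ T, i < j → C i j = c := by
  have hiter : ∀ k, (rIter C S k).Infinite ∧ rIter C S k ⊆ S := by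
    intro k
    induction k with
    | zero => exact ⟨hS, Set.Subset.rfl⟩
    | succ k ih =>
      obtain ⟨h1, h2, _, _⟩ := rNext_spec C ih.1
      exact ⟨h1, h2.trans ih.2⟩
  set a : ℕ → ℕ := fun k => sInf (rIter C S k) with ha
  have hamem : ∀ k, a k ∈ rIter C S k := fun k => Nat.sInf_mem (hiter k).1.nonempty
  have hstep : ∀ k, rIter C S (k + 1) ⊆ rIter C S k ∧ (∀ y ∈ rIter C S (k + 1), a k < y) ∧
      ∃ c, ∀ y ∈ rIter C S (k + 1), C (a k) y = c := by
    intro k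
    obtain ⟨_, h2, h3, h4⟩ := rNext_spec C (hiter k).1
    exact ⟨h2, h3, h4⟩
  have hmono : ∀ k l, k < l → rIter C S l ⊆ rIter C S (k + 1) := by
    intro k l hkl
    induction l with
    | zero => omega
    | succ l ih =>
      rcases Nat.lt_succ_iff_lt_or_eq.1 hkl with h | h
      · exact (hstep l).1.trans (ih h)
      · subst h; exact Set.Subset.rfl
  have hstrict : StrictMono a :=
    strictMono_nat_of_lt_succ (fun k => (hstep k).2.1 _ (hamem (k + 1)))
  set col : ℕ → γ := fun k => (hstep k).2.2.choose with hcoldef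
  have hcol : ∀ k l, k < l → C (a k) (a l) = col k := fun k l hkl =>
    (hstep k).2.2.choose_spec _ (hmono k l hkl (hamem l))
  obtain ⟨c, hc⟩ := infinite_fiber (Set.infinite_univ (α := ℕ)) col
  refine ⟨a '' {k | col k = c}, ?_, ?_, c, ?_⟩
  · rintro x ⟨k, _, rfl⟩
    exact (hiter k).2 (hamem k)
  · have : {k | col k = c}.Infinite := by
      have he : {n | n ∈ (Set.univ : Set ℕ) ∧ col n = c} = {k | col k = c} := by simp
      rwa [he] at hc
    exact this.image (hstrict.injective.injOn)
  · rintro i ⟨k, hk, rfl⟩ j ⟨l, hl, rfl⟩ hij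
    have hkl : k < l := by
      by_contra hle
      push_neg at hle
      rcases hle.lt_or_eq with h | h
      · exact absurd (hstrict h) (by omega)
      · subst h; omega
    rw [hcol k l hkl, hk]

end Aux


section Walls

lemma nested_of_not_crosses {u v : Set X} (h : ¬ Crosses u v) :
    u ∩ v = ∅ ∨ u ∩ vᶜ = ∅ ∨ uᶜ ∩ v = ∅ ∨ uᶜ ∩ vᶜ = ∅ := by
  rcases Set.eq_empty_or_nonempty (u ∩ v) with h1 | h1
  · exact Or.inl h1
  rcases Set.eq_empty_or_nonempty (u ∩ vᶜ) with h2 | h2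
  · exact Or.inr (Or.inl h2)
  rcases Set.eq_empty_or_nonempty (uᶜ ∩ v) with h3 | h3
  · exact Or.inr (Or.inr (Or.inl h3))
  rcases Set.eq_empty_or_nonempty (uᶜ ∩ vᶜ) with h4 | h4
  · exact Or.inr (Or.inr (Or.inr h4))
  exact absurd ⟨h1, h2, h3, h4⟩ h

/-- From any infinite set of walls inside a UBS-like ambient set, extract a descending
chain of halfspaces. -/
lemma exists_chain {W V S : Set (Set X)} (hVW : V ⊆ W) (hSV : S ⊆ V) (hS : S.Infinite)
    (hft : ¬ HasFacingTriple V) {D : ℕ} (hdim : DimLE W D) :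
    ∃ (c : ℕ → Set X) (H : ℕ → Set X), (∀ n, c n ∈ S) ∧ Function.Injective c ∧
      (∀ n, H n = c n ∨ H n = (c n)ᶜ) ∧ (∀ n m : ℕ, n ≤ m → H m ⊆ H n) := by
  classical
  obtain ⟨f, hfinj, hfS⟩ : ∃ f : ℕ → Set X, Function.Injective f ∧ ∀ n, f n ∈ S := by
    exact ⟨fun n => (Set.Infinite.natEmbedding S hS n : Set X),
      fun a b hab => (Set.Infinite.natEmbedding S hS).injective (Subtype.val_injective hab),
      fun n => (Set.Infinite.natEmbedding S hS n).2⟩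
  set C : ℕ → ℕ → Fin 5 := fun i j =>
    if Crosses (f i) (f j) then (0 : Fin 5)
    else if f i ∩ f j = ∅ then 1
    else if f i ∩ (f j)ᶜ = ∅ then 2
    else if (f i)ᶜ ∩ f j = ∅ then 3
    else 4 with hC
  obtain ⟨T, hTsub, hTinf, col, hcol⟩ := ramsey_inf C Set.univ Set.infinite_univ
  obtain ⟨t, htmono, htT⟩ : ∃ t : ℕ → ℕ, StrictMono t ∧ ∀ n, t n ∈ T :=
    ⟨fun n => Nat.nth (· ∈ T) n, fun a b hab => (Nat.nth_lt_nth hTinf).2 hab,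
      fun n => Nat.nth_mem_of_infinite hTinf n⟩
  have hginj : Function.Injective (fun n => f (t n)) :=
    fun a b hab => htmono.injective (hfinj hab)
  have hgne : ∀ {n m : ℕ}, n ≠ m → f (t n) ≠ f (t m) := fun h h' => h (hginj h')
  have hinv : ∀ n m : ℕ, n < m →
      (col = 0 ∧ Crosses (f (t n)) (f (t m))) ∨
      (col = 1 ∧ f (t n) ∩ f (t m) = ∅) ∨
      (col = 2 ∧ f (t n) ∩ (f (t m))ᶜ = ∅) ∨
      (col = 3 ∧ (f (t n))ᶜ ∩ f (t m) = ∅) ∨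
      (col = 4 ∧ (f (t n))ᶜ ∩ (f (t m))ᶜ = ∅) := by
    intro n m h
    have hc := hcol _ (htT n) _ (htT m) (htmono h)
    rw [hC] at hc
    simp only at hc
    split_ifs at hc with h1 h2 h3 h4
    · exact Or.inl ⟨hc.symm, h1⟩
    · exact Or.inr (Or.inl ⟨hc.symm, h2⟩)
    · exact Or.inr (Or.inr (Or.inl ⟨hc.symm, h3⟩))
    · exact Or.inr (Or.inr (Or.inr (Or.inl ⟨hc.symm, h4⟩)))
    · refine Or.inr (Or.inr (Or.inr (Or.inr ⟨hc.symm, ?_⟩)))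
      rcases nested_of_not_crosses h1 with h' | h' | h' | h'
      · exact absurd h' h2
      · exact absurd h' h3
      · exact absurd h' h4
      · exact h'
  fin_cases col
  · -- everything crosses : contradiction with dimension
    exfalso
    have hcross : ∀ n m : ℕ, n < m → Crosses (f (t n)) (f (t m)) := by
      intro n m h
      rcases hinv n m h with h' | h' | h' | h' | h' <;>
        first | exact h'.2 | exact absurd h'.1 (by decide)
    have hpw : (Set.range (fun n => f (t n))).Pairwise Crosses := by
      rintro x ⟨n, rfl⟩ y ⟨m, rfl⟩ hxy
      rcases lt_trichotomy n m with h | h | h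
      · exact hcross n m h
      · exact absurd (congrArg (fun n => f (t n)) h) hxy
      · exact crosses_comm (hcross m n h)
    have hfin := (hdim _ (fun x hx => by
      obtain ⟨n, rfl⟩ := hx; exact hVW (hSV (hfS (t n)))) hpw).1
    exact (Set.infinite_range_of_injective hginj) hfin
  · -- pairwise disjoint : facing triple
    exfalso
    have hdisj : ∀ n m : ℕ, n < m → f (t n) ∩ f (t m) = ∅ := by
      intro n m h
      rcases hinv n m h with h' | h' | h' | h' | h' <;>
        first | exact h'.2 | exact absurd h'.1 (by decide)
    refine hft ⟨f (t 0), hSV (hfS (t 0)), f (t 1), hSV (hfS (t 1)), f (t 2), hSV (hfS (t 2)),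
      hgne (by norm_num), hgne (by norm_num), hgne (by norm_num),
      f (t 0), f (t 1), f (t 2), Or.inl rfl, Or.inl rfl, Or.inl rfl, ?_, ?_, ?_⟩
    · exact Set.disjoint_iff_inter_eq_empty.2 (hdisj 0 1 (by norm_num))
    · exact Set.disjoint_iff_inter_eq_empty.2 (hdisj 0 2 (by norm_num))
    · exact Set.disjoint_iff_inter_eq_empty.2 (hdisj 1 2 (by norm_num))
  · -- ascending : take complements
    have hasc : ∀ n m : ℕ, n < m → f (t n) ∩ (f (t m))ᶜ = ∅ := by
      intro n m h
      rcases hinv n m h with h' | h' | h' | h' | h' <;>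
        first | exact h'.2 | exact absurd h'.1 (by decide)
    refine ⟨fun n => f (t n), fun n => (f (t n))ᶜ, fun n => hfS (t n), hginj,
      fun n => Or.inr rfl, ?_⟩
    intro n m hnm
    rcases eq_or_lt_of_le hnm with rfl | h
    · exact le_refl _
    · have h' := hasc n m h
      intro x hx
      simp only [Set.mem_compl_iff] at hx ⊢
      intro hxn
      exact Set.eq_empty_iff_forall_notMem.1 h' x ⟨hxn, hx⟩
  · -- descending
    have hdesc : ∀ n m : ℕ, n < m → (f (t n))ᶜ ∩ f (t m) = ∅ := by
      intro n m h
      rcases hinv n m h with h' | h' | h' | h' | h' <;>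
        first | exact h'.2 | exact absurd h'.1 (by decide)
    refine ⟨fun n => f (t n), fun n => f (t n), fun n => hfS (t n), hginj,
      fun n => Or.inl rfl, ?_⟩
    intro n m hnm
    rcases eq_or_lt_of_le hnm with rfl | h
    · exact le_refl _
    · have h' := hdesc n m h
      intro x hx
      by_contra hxn
      exact Set.eq_empty_iff_forall_notMem.1 h' x ⟨hxn, hx⟩
  · -- complements pairwise disjoint : facing triple
    exfalso
    have hdisj : ∀ n m : ℕ, n < m → (f (t n))ᶜ ∩ (f (t m))ᶜ = ∅ := by
      intro n m h
      rcases hinv n m h with h' | h' | h' | h' | h' <;>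
        first | exact h'.2 | exact absurd h'.1 (by decide)
    refine hft ⟨f (t 0), hSV (hfS (t 0)), f (t 1), hSV (hfS (t 1)), f (t 2), hSV (hfS (t 2)),
      hgne (by norm_num), hgne (by norm_num), hgne (by norm_num),
      (f (t 0))ᶜ, (f (t 1))ᶜ, (f (t 2))ᶜ, Or.inr rfl, Or.inr rfl, Or.inr rfl, ?_, ?_, ?_⟩
    · exact Set.disjoint_iff_inter_eq_empty.2 (hdisj 0 1 (by norm_num))
    · exact Set.disjoint_iff_inter_eq_empty.2 (hdisj 0 2 (by norm_num))
    · exact Set.disjoint_iff_inter_eq_empty.2 (hdisj 1 2 (by norm_num))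

end Walls


section Trichotomy

lemma subset_of_inter_compl_eq_empty {α : Type*} {s t : Set α} (h : s ∩ tᶜ = ∅) : s ⊆ t := by
  intro x hx
  by_contra hx'
  exact Set.eq_empty_iff_forall_notMem.1 h x ⟨hx, hx'⟩

lemma subset_compl_of_inter_eq_empty {α : Type*} {s t : Set α} (h : s ∩ t = ∅) : t ⊆ sᶜ := by
  intro x hx hxs
  exact Set.eq_empty_iff_forall_notMem.1 h x ⟨hxs, hx⟩

lemma compl_side {K v : Set X} (h : K = v ∨ K = vᶜ) : Kᶜ = v ∨ Kᶜ = vᶜ := by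
  rcases h with rfl | rfl
  · exact Or.inr rfl
  · exact Or.inl (compl_compl v)

lemma liesIn_of_side {u w Hu Hw : Set X} (hne : u ≠ w) (hu : Hu = u ∨ Hu = uᶜ)
    (hsub : Hu ⊆ Hw) : LiesIn u Hw w := by
  rcases hu with rfl | rfl
  · exact ⟨hne, Or.inl hsub⟩
  · exact ⟨hne, Or.inr hsub⟩

lemma nested_sides {u v Hu Kv : Set X} (hu : Hu = u ∨ Hu = uᶜ) (hv : Kv = v ∨ Kv = vᶜ)
    (h : ¬ Crosses u v) :
    Hu ∩ Kv = ∅ ∨ Hu ∩ Kvᶜ = ∅ ∨ Huᶜ ∩ Kv = ∅ ∨ Huᶜ ∩ Kvᶜ = ∅ := by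
  rcases hu with rfl | rfl <;> rcases hv with rfl | rfl <;>
    rcases nested_of_not_crosses h with h' | h' | h' | h' <;>
    (first | simp only [compl_compl] | skip) <;> tauto

/-- Two infinite families lying on opposite sides of a wall contradict unidirectionality. -/
lemma unidir_contra {W V : Set (Set X)} (hV : IsUBS W V) {w : Set X} (hw : w ∈ V) {Hw : Set X}
    (hHw : Hw = w ∨ Hw = wᶜ) {u v : ℕ → Set X}
    (hu : ∀ i, u i ∈ V) (hv : ∀ i, v i ∈ V)
    (huinj : Function.Injective u) (hvinj : Function.Injective v)
    (huL : ∀ i, LiesIn (u i) Hw w) (hvL : ∀ i, LiesIn (v i) Hwᶜ w) : False := by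
  obtain ⟨-, -, -, huni, -⟩ := hV
  have h1 : {x ∈ V | LiesIn x w w}.Infinite ∧ {x ∈ V | LiesIn x wᶜ w}.Infinite := by
    rcases hHw with rfl | rfl
    · exact ⟨Set.infinite_of_injective_forall_mem huinj (fun i => ⟨hu i, huL i⟩),
        Set.infinite_of_injective_forall_mem hvinj (fun i => ⟨hv i, hvL i⟩)⟩
    · constructor
      · refine Set.infinite_of_injective_forall_mem hvinj (fun i => ⟨hv i, ?_⟩)
        have h2 := hvL i
        rwa [compl_compl] at h2
      · exact Set.infinite_of_injective_forall_mem huinj (fun i => ⟨hu i, huL i⟩)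
  rcases huni w hw with h | h
  · exact h1.1 h
  · exact h1.2 h

/-- The key trichotomy for a pair of chains lying in disjoint inseparable subsets of a
common UBS. -/
lemma chain_trichotomy {W V A B : Set (Set X)}
    (hV : IsUBS W V) (hAV : A ⊆ V) (hBV : B ⊆ V)
    (hBins : InseparableIn W B)
    (hAB : Disjoint A B)
    {c H d K : ℕ → Set X}
    (hcA : ∀ n, c n ∈ A) (hcinj : Function.Injective c)
    (hcH : ∀ n, H n = c n ∨ H n = (c n)ᶜ) (hH : ∀ n m : ℕ, n ≤ m → H m ⊆ H n)
    (hdB : ∀ n, d n ∈ B) (hdinj : Function.Injective d)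
    (hdK : ∀ n, K n = d n ∨ K n = (d n)ᶜ) (hK : ∀ n m : ℕ, n ≤ m → K m ⊆ K n) :
    (H 0)ᶜ ∩ (K 0)ᶜ = ∅ ∨
    (∃ N, ∀ n ≥ N, {m | ¬ Crosses (c n) (d m)}.Finite) ∨
    (∃ N, ∀ m ≥ N, {n | ¬ Crosses (c n) (d m)}.Finite) := by
  have hVW : V ⊆ W := hV.1
  have hcd_ne : ∀ n m, c n ≠ d m := by
    intro n m h
    exact Set.disjoint_left.1 hAB (hcA n) (h ▸ hdB m)
  -- type 1 everywhere (for a fixed n) is impossible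
  have htype1 : ∀ n, ¬ (∀ m, H n ⊆ K m) := by
    intro n hall
    refine unidir_contra hV (hAV (hcA n)) (hcH n)
      (u := fun i => c (n + 1 + i)) (v := fun i => d i)
      (fun i => hAV (hcA _)) (fun i => hBV (hdB _))
      (fun a b hab => by have := hcinj hab; omega) hdinj ?_ ?_
    · exact fun i => liesIn_of_side (hcinj.ne (by omega)) (hcH (n + 1 + i))
        (hH n (n + 1 + i) (by omega))
    · exact fun i => liesIn_of_side (hcd_ne n i).symm (compl_side (hdK i))
        (Set.compl_subset_compl.2 (hall i))
  -- type 4 everywhere (for a fixed m) is impossible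
  have htype4 : ∀ m, ¬ (∀ n, K m ⊆ H n) := by
    intro m hall
    refine unidir_contra hV (hBV (hdB m)) (hdK m)
      (u := fun i => d (m + 1 + i)) (v := fun i => c i)
      (fun i => hBV (hdB _)) (fun i => hAV (hcA _))
      (fun a b hab => by have := hdinj hab; omega) hcinj ?_ ?_
    · exact fun i => liesIn_of_side (hdinj.ne (by omega)) (hdK (m + 1 + i))
        (hK m (m + 1 + i) (by omega))
    · exact fun i => liesIn_of_side (hcd_ne i m) (compl_side (hcH i))
        (Set.compl_subset_compl.2 (hall i))
  -- type 2 is impossible for every pair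
  have htype2 : ∀ n m, H n ∩ K m ≠ ∅ := by
    intro n m hem
    refine unidir_contra hV (hAV (hcA n)) (hcH n)
      (u := fun i => c (n + 1 + i)) (v := fun i => d (m + i))
      (fun i => hAV (hcA _)) (fun i => hBV (hdB _))
      (fun a b hab => by have := hcinj hab; omega)
      (fun a b hab => by have := hdinj hab; omega) ?_ ?_
    · exact fun i => liesIn_of_side (hcinj.ne (by omega)) (hcH (n + 1 + i))
        (hH n (n + 1 + i) (by omega))
    · refine fun i => liesIn_of_side (hcd_ne n (m + i)).symm (hdK (m + i)) ?_
      exact (hK m (m + i) (by omega)).trans (subset_compl_of_inter_eq_empty hem)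
  -- a wall of the first chain cannot separate two walls of the second chain
  have hsep : ∀ n m m', m ≠ m' → K m ⊆ H n → H n ⊆ K m' → False := by
    intro n m m' hne h1 h2
    have hsep' : Separates (c n) (d m) (d m') := by
      refine ⟨hdinj.ne hne, hcd_ne n m ∘ Eq.symm, hcd_ne n m' ∘ Eq.symm,
        K m, (K m')ᶜ, H n, hdK m, compl_side (hdK m'), hcH n, h1,
        Set.compl_subset_compl.2 h2⟩
    have hmem := hBins (d m) (hdB m) (d m') (hdB m') (c n) (hVW (hAV (hcA n))) hsep'
    exact Set.disjoint_left.1 hAB (hcA n) hmem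
  -- main argument
  by_contra hcon
  push_neg at hcon
  obtain ⟨hT3, hQ1, hQ2⟩ := hcon
  obtain ⟨x0, hx0H, hx0K⟩ := hT3
  obtain ⟨m0, -, hm0⟩ := hQ2 0
  have hm0' : {n | ¬ Crosses (c n) (d m0)}.Infinite := hm0
  have hcases0 : ∀ n, ¬ Crosses (c n) (d m0) → H n ⊆ K m0 ∨ K m0 ⊆ H n := by
    intro n hn
    rcases nested_sides (hcH n) (hdK m0) hn with h' | h' | h' | h'
    · exact absurd h' (htype2 n m0)
    · exact Or.inl (subset_of_inter_compl_eq_empty h')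
    · exact Or.inr (subset_of_inter_compl_eq_empty (by rwa [Set.inter_comm] at h'))
    · exact absurd h' (by
        apply Set.nonempty_iff_ne_empty.1
        exact ⟨x0, Set.compl_subset_compl.2 (hH 0 n (Nat.zero_le n)) hx0H,
          Set.compl_subset_compl.2 (hK 0 m0 (Nat.zero_le m0)) hx0K⟩)
  -- infinitely many n of type 1 or of type 4 w.r.t. m0
  have hsplit : {n | H n ⊆ K m0}.Infinite ∨ {n | K m0 ⊆ H n}.Infinite := by
    by_contra hboth
    push_neg at hboth
    refine hm0' ((hboth.1.union hboth.2).subset ?_)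
    intro n hn
    rcases hcases0 n hn with h' | h'
    · exact Or.inl h'
    · exact Or.inr h'
  have hS1 : {n | H n ⊆ K m0}.Infinite := by
    rcases hsplit with h | h
    · exact h
    · exfalso
      apply htype4 m0
      intro n
      obtain ⟨n', hn', hlt⟩ := h.exists_gt n
      exact hn'.trans (hH n n' (le_of_lt hlt))
  obtain ⟨n1, hn1⟩ : ∃ n1, H n1 ⊆ K m0 := hS1.nonempty
  obtain ⟨n2, hn2ge, hn2⟩ := hQ1 n1
  have hn2sub : H n2 ⊆ K m0 := (hH n1 n2 hn2ge).trans hn1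
  have hn2' : {m | ¬ Crosses (c n2) (d m)}.Infinite := hn2
  have hcasesn2 : ∀ m, ¬ Crosses (c n2) (d m) → H n2 ⊆ K m ∨ K m ⊆ H n2 := by
    intro m hm
    rcases nested_sides (hcH n2) (hdK m) hm with h' | h' | h' | h'
    · exact absurd h' (htype2 n2 m)
    · exact Or.inl (subset_of_inter_compl_eq_empty h')
    · exact Or.inr (subset_of_inter_compl_eq_empty (by rwa [Set.inter_comm] at h'))
    · exact absurd h' (by
        apply Set.nonempty_iff_ne_empty.1
        exact ⟨x0, Set.compl_subset_compl.2 (hH 0 n2 (Nat.zero_le n2)) hx0H,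
          Set.compl_subset_compl.2 (hK 0 m (Nat.zero_le m)) hx0K⟩)
  -- no type 4 for m ≠ m0, so type 1 for infinitely many m
  have hT1inf : {m | H n2 ⊆ K m}.Infinite := by
    have hsub : {m | ¬ Crosses (c n2) (d m)} ⊆ {m | H n2 ⊆ K m} ∪ {m0} := by
      intro m hm
      rcases hcasesn2 m hm with h' | h'
      · exact Or.inl h'
      · by_cases hmm : m = m0
        · exact Or.inr (by simp [hmm])
        · exact absurd (hsep n2 m m0 hmm h' hn2sub) not_false
    by_contra hfin
    rw [Set.not_infinite] at hfin
    exact hn2' ((hfin.union (Set.finite_singleton m0)).subset hsub)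
  exact htype1 n2 (fun m => by
    obtain ⟨m', hm', hlt⟩ := hT1inf.exists_gt m
    exact hm'.trans (hK m m' (le_of_lt hlt)))

end Trichotomy


section Finiteness

/-- Greedy selection of pairwise crossing walls from chains ordered by the `Q` relation. -/
lemma greedy_select {k : ℕ} (c : ℕ → ℕ → Set X)
    (hQ : ∀ i j, i < j → j < k → ∃ N, ∀ n ≥ N, {m | ¬ Crosses (c i n) (c j m)}.Finite) :
    ∃ f : ℕ → ℕ, ∀ i j, i < j → j < k → Crosses (c i (f i)) (c j (f j)) := by
  classical
  have hN : ∀ i j, ∃ N, i < j → j < k → ∀ n ≥ N, {m | ¬ Crosses (c i n) (c j m)}.Finite := by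
    intro i j
    by_cases h : i < j ∧ j < k
    · obtain ⟨N, hN⟩ := hQ i j h.1 h.2
      exact ⟨N, fun _ _ => hN⟩
    · exact ⟨0, fun h1 h2 => absurd ⟨h1, h2⟩ h⟩
  choose N hNs using hN
  set maxN : ℕ → ℕ := fun i => Finset.sup (Finset.range k) (N i) with hmaxN
  have key : ∀ r : ℕ, ∃ f : ℕ → ℕ, (∀ i, maxN i ≤ f i) ∧
      ∀ i j, i < j → j < r → j < k → Crosses (c i (f i)) (c j (f j)) := by
    intro r
    induction r with
    | zero => exact ⟨maxN, fun i => le_refl _, fun i j _ hj _ => absurd hj (by omega)⟩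
    | succ r ih =>
      obtain ⟨f, hf1, hf2⟩ := ih
      by_cases hrk : r < k
      · have hbad : ({m | m < maxN r} ∪ ⋃ i ∈ (Finset.range r : Set ℕ),
            {m | ¬ Crosses (c i (f i)) (c r m)}).Finite := by
          refine (Set.finite_lt_nat (maxN r)).union ?_
          refine Set.Finite.biUnion (Finset.range r).finite_toSet ?_
          intro i hi
          simp only [Finset.coe_range, Set.mem_Iio] at hi
          exact hNs i r hi hrk (f i)
            (le_trans (Finset.le_sup (Finset.mem_range.2 hrk)) (hf1 i))
        obtain ⟨m', hm'⟩ := (hbad.infinite_compl).nonempty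
        have hm'' : m' ∉ ({m | m < maxN r} ∪ ⋃ i ∈ (Finset.range r : Set ℕ),
            {m | ¬ Crosses (c i (f i)) (c r m)}) := hm'
        refine ⟨Function.update f r m', ?_, ?_⟩
        · intro i
          rcases eq_or_ne i r with rfl | hir
          · rw [Function.update_self]
            by_contra hlt
            exact hm'' (Or.inl (show m' < maxN i from by omega))
          · rw [Function.update_of_ne hir]
            exact hf1 i
        · intro i j hij hjr hjk
          rcases Nat.lt_succ_iff_lt_or_eq.1 hjr with hjr' | rfl
          · rw [Function.update_of_ne (by omega : i ≠ r), Function.update_of_ne (by omega : j ≠ r)]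
            exact hf2 i j hij hjr' hjk
          · rw [Function.update_of_ne (by omega : i ≠ j), Function.update_self]
            by_contra hcc
            refine hm'' (Or.inr ?_)
            exact Set.mem_biUnion (by simpa using hij) hcc
      · refine ⟨f, hf1, ?_⟩
        intro i j hij hjr hjk
        rcases Nat.lt_succ_iff_lt_or_eq.1 hjr with h | rfl
        · exact hf2 i j hij h hjk
        · omega
  obtain ⟨f, -, hf⟩ := key k
  exact ⟨f, fun i j h1 h2 => hf i j h1 h2 h2⟩

/-- A family of pairwise crossing walls contradicting the dimension bound. -/
lemma dim_contra {W : Set (Set X)} {D : ℕ} (hdim : DimLE W D) (w : ℕ → Set X)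
    (hw : ∀ a, a < D + 1 → w a ∈ W)
    (hcr : ∀ a b, a < b → b < D + 1 → Crosses (w a) (w b)) : False := by
  classical
  have hpair : ∀ a b, a < D + 1 → b < D + 1 → a ≠ b → Crosses (w a) (w b) := by
    intro a b ha hb hab
    rcases lt_trichotomy a b with h | h | h
    · exact hcr a b h hb
    · exact absurd h hab
    · exact crosses_comm (hcr b a h ha)
  set F : Finset (Set X) := (Finset.range (D + 1)).image w with hF
  have hinj : Set.InjOn w ↑(Finset.range (D + 1)) := by
    intro a ha b hb hab
    simp only [Finset.coe_range, Set.mem_Iio] at ha hb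
    by_contra hne
    exact crosses_ne (hpair a b ha hb hne) hab
  have hcard : F.card = D + 1 := by
    rw [hF, Finset.card_image_of_injOn hinj, Finset.card_range]
  have hsub : (↑F : Set (Set X)) ⊆ W := by
    intro x hx
    simp only [hF, Finset.coe_image, Set.mem_image, Finset.coe_range, Set.mem_Iio] at hx
    obtain ⟨a, ha, rfl⟩ := hx
    exact hw a ha
  have hpw : (↑F : Set (Set X)).Pairwise Crosses := by
    intro x hx y hy hxy
    simp only [hF, Finset.coe_image, Set.mem_image, Finset.coe_range, Set.mem_Iio] at hx hy
    obtain ⟨a, ha, rfl⟩ := hx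
    obtain ⟨b, hb, rfl⟩ := hy
    exact hpair a b ha hb (fun h => hxy (congrArg w h))
  have := (hdim _ hsub hpw).2
  rw [Set.ncard_coe_finset, hcard] at this
  omega

/-- A UBS cannot contain infinitely many pairwise disjoint infinite inseparable subsets. -/
lemma components_finite {W V : Set (Set X)} {D : ℕ} (hdim : DimLE W D)
    (hV : IsUBS W V) {J : Type} (Uc : J → Set (Set X))
    (hUV : ∀ j, Uc j ⊆ V) (hins : ∀ j, InseparableIn W (Uc j))
    (hinf : ∀ j, (Uc j).Infinite)
    (hdisj : Pairwise (Function.onFun Disjoint Uc)) : Finite J := by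
  classical
  by_contra hfin
  rw [not_finite_iff_infinite] at hfin
  set e := Infinite.natEmbedding J with he
  have hch : ∀ i : ℕ, ∃ (c H : ℕ → Set X), (∀ n, c n ∈ Uc (e i)) ∧ Function.Injective c ∧
      (∀ n, H n = c n ∨ H n = (c n)ᶜ) ∧ (∀ n m : ℕ, n ≤ m → H m ⊆ H n) :=
    fun i => exists_chain hV.1 (hUV (e i)) (hinf (e i)) hV.2.2.2.2 hdim
  choose c H hcmem hcinj hcH hHmono using hch
  have hdisj' : ∀ i j : ℕ, i ≠ j → Disjoint (Uc (e i)) (Uc (e j)) :=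
    fun i j hij => hdisj (fun h => hij (e.injective h))
  have hwne : ∀ i j n m, i ≠ j → c i n ≠ c j m := by
    intro i j n m hij hEq
    exact Set.disjoint_left.1 (hdisj' i j hij) (hcmem i n) (hEq ▸ hcmem j m)
  have htri : ∀ i j : ℕ, i ≠ j →
      ((H i 0)ᶜ ∩ (H j 0)ᶜ = ∅ ∨
      (∃ N, ∀ n ≥ N, {m | ¬ Crosses (c i n) (c j m)}.Finite) ∨
      (∃ N, ∀ m ≥ N, {n | ¬ Crosses (c i n) (c j m)}.Finite)) :=
    fun i j hij => chain_trichotomy hV (hUV (e i)) (hUV (e j)) (hins (e j)) (hdisj' i j hij)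
      (hcmem i) (hcinj i) (hcH i) (hHmono i) (hcmem j) (hcinj j) (hcH j) (hHmono j)
  set C : ℕ → ℕ → Fin 3 := fun i j =>
    if (H i 0)ᶜ ∩ (H j 0)ᶜ = ∅ then (0 : Fin 3)
    else if ∃ N, ∀ n ≥ N, {m | ¬ Crosses (c i n) (c j m)}.Finite then 1
    else 2 with hC
  obtain ⟨T, -, hTinf, col, hcol⟩ := ramsey_inf C Set.univ Set.infinite_univ
  obtain ⟨t, htmono, htT⟩ : ∃ t : ℕ → ℕ, StrictMono t ∧ ∀ n, t n ∈ T :=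
    ⟨fun n => Nat.nth (· ∈ T) n, fun a b hab => (Nat.nth_lt_nth hTinf).2 hab,
      fun n => Nat.nth_mem_of_infinite hTinf n⟩
  have hinv : ∀ a b : ℕ, a < b →
      (col = 0 ∧ (H (t a) 0)ᶜ ∩ (H (t b) 0)ᶜ = ∅) ∨
      (col = 1 ∧ ∃ N, ∀ n ≥ N, {m | ¬ Crosses (c (t a) n) (c (t b) m)}.Finite) ∨
      (col = 2 ∧ ∃ N, ∀ m ≥ N, {n | ¬ Crosses (c (t a) n) (c (t b) m)}.Finite) := by
    intro a b hab
    have hc := hcol _ (htT a) _ (htT b) (htmono hab)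
    rw [hC] at hc
    simp only at hc
    have htne : t a ≠ t b := fun h => absurd (htmono.injective h) (by omega)
    split_ifs at hc with h1 h2
    · exact Or.inl ⟨hc.symm, h1⟩
    · exact Or.inr (Or.inl ⟨hc.symm, h2⟩)
    · refine Or.inr (Or.inr ⟨hc.symm, ?_⟩)
      rcases htri (t a) (t b) htne with h | h | h
      · exact absurd h h1
      · exact absurd h h2
      · exact h
  fin_cases col
  · -- three pairwise "tangent" chains give a facing triple
    have hemp : ∀ a b : ℕ, a < b → (H (t a) 0)ᶜ ∩ (H (t b) 0)ᶜ = ∅ := by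
      intro a b hab
      rcases hinv a b hab with h | h | h
      · exact h.2
      · exact absurd h.1 (by decide)
      · exact absurd h.1 (by decide)
    have htne3 : ∀ a b : ℕ, a ≠ b → c (t a) 0 ≠ c (t b) 0 :=
      fun a b hab => hwne (t a) (t b) 0 0 (fun h => hab (htmono.injective h))
    refine hV.2.2.2.2 ⟨c (t 0) 0, hUV _ (hcmem (t 0) 0), c (t 1) 0, hUV _ (hcmem (t 1) 0),
      c (t 2) 0, hUV _ (hcmem (t 2) 0),
      htne3 0 1 (by omega), htne3 0 2 (by omega), htne3 1 2 (by omega),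
      (H (t 0) 0)ᶜ, (H (t 1) 0)ᶜ, (H (t 2) 0)ᶜ,
      compl_side (hcH (t 0) 0), compl_side (hcH (t 1) 0), compl_side (hcH (t 2) 0),
      Set.disjoint_iff_inter_eq_empty.2 (hemp 0 1 (by omega)),
      Set.disjoint_iff_inter_eq_empty.2 (hemp 0 2 (by omega)),
      Set.disjoint_iff_inter_eq_empty.2 (hemp 1 2 (by omega))⟩
  · -- coherent Q-direction : greedy selection of D+1 pairwise crossing walls
    have hQ : ∀ a b, a < b → b < D + 1 →
        ∃ N, ∀ n ≥ N, {m | ¬ Crosses (c (t a) n) (c (t b) m)}.Finite := by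
      intro a b hab _
      rcases hinv a b hab with h | h | h
      · exact absurd h.1 (by decide)
      · exact h.2
      · exact absurd h.1 (by decide)
    obtain ⟨f, hf⟩ := greedy_select (fun a => c (t a)) hQ
    exact dim_contra hdim (fun a => c (t a) (f a))
      (fun a _ => hV.1 (hUV _ (hcmem (t a) (f a))))
      (fun a b h1 h2 => hf a b h1 h2)
  · -- reversed Q-direction
    have hQ : ∀ a b, a < b → b < D + 1 →
        ∃ N, ∀ n ≥ N, {m | ¬ Crosses (c (t (D + 1 - 1 - a)) n) (c (t (D + 1 - 1 - b)) m)}.Finite := by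
      intro a b hab hbk
      have h1 : D + 1 - 1 - b < D + 1 - 1 - a := by omega
      rcases hinv (D + 1 - 1 - b) (D + 1 - 1 - a) h1 with h | h | h
      · exact absurd h.1 (by decide)
      · exact absurd h.1 (by decide)
      · obtain ⟨N, hN⟩ := h.2
        refine ⟨N, fun n hn => ?_⟩
        refine (hN n hn).subset ?_
        intro m hm
        exact fun hcc => hm (crosses_comm hcc)
    obtain ⟨f, hf⟩ := greedy_select (fun a => c (t (D + 1 - 1 - a))) hQ
    exact dim_contra hdim (fun a => c (t (D + 1 - 1 - a)) (f a))
      (fun a _ => hV.1 (hUV _ (hcmem _ (f a))))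
      (fun a b h1 h2 => hf a b h1 h2)

end Finiteness


section AlmostEqLemmas

lemma almostEq_symm {S T : Set (Set X)} (h : AlmostEq S T) : AlmostEq T S := ⟨h.2, h.1⟩

lemma almostEq_trans {S T R : Set (Set X)} (h1 : AlmostEq S T) (h2 : AlmostEq T R) :
    AlmostEq S R := by
  constructor
  · refine (h1.1.union h2.1).subset ?_
    intro x hx
    by_cases hT : x ∈ T
    · exact Or.inr ⟨hT, hx.2⟩
    · exact Or.inl ⟨hx.1, hT⟩
  · refine (h2.2.union h1.2).subset ?_
    intro x hx
    by_cases hT : x ∈ T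
    · exact Or.inr ⟨hT, hx.2⟩
    · exact Or.inl ⟨hx.1, hT⟩

lemma not_almostEq {S T : Set (Set X)} (hd : Disjoint S T) (hi : S.Infinite) :
    ¬ AlmostEq S T := fun h => hi (hd.sdiff_eq_left ▸ h.1)

lemma ubs_inter {W A B : Set (Set X)} (hA : IsUBS W A) (hB : IsUBS W B)
    (hinf : (A ∩ B).Infinite) : IsUBS W (A ∩ B) := by
  refine ⟨fun x hx => hA.1 hx.1, hinf, ?_, ?_, ?_⟩
  · intro u hu v hv w hw hsep
    exact ⟨hA.2.2.1 u hu.1 v hv.1 w hw hsep, hB.2.2.1 u hu.2 v hv.2 w hw hsep⟩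
  · intro w hw
    rcases hA.2.2.2.1 w hw.1 with h | h
    · exact Or.inl (h.subset (fun x hx => ⟨hx.1.1, hx.2⟩))
    · exact Or.inr (h.subset (fun x hx => ⟨hx.1.1, hx.2⟩))
  · intro hft
    obtain ⟨a, ha, b, hb, c', hc', rest⟩ := hft
    exact hA.2.2.2.2 ⟨a, ha.1, b, hb.1, c', hc'.1, rest⟩

lemma min_ae {W A B : Set (Set X)} (hA : MinUBS W A) (hB : MinUBS W B)
    (hinf : (A ∩ B).Infinite) : AlmostEq A B := by
  have hu := ubs_inter hA.1 hB.1 hinf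
  have h1 : AlmostEq (A ∩ B) A := hA.2 _ hu Set.inter_subset_left
  have h2 : AlmostEq (A ∩ B) B := hB.2 _ hu Set.inter_subset_right
  exact almostEq_trans (almostEq_symm h1) h2

end AlmostEqLemmas

/-- Uniqueness of the decomposition of a UBS into minimal UBSs, in finite dimension. -/
theorem ubs_decomposition_unique (W : Set (Set X))
    (hWc : W.Countable) (hWwall : ∀ h ∈ W, IsWall h)
    (hWadm : Admissible W) (hWnic : NoInfCross W)
    (D : ℕ) (hdim : DimLE W D)
    (V : Set (Set X)) (hV : IsUBS W V)
    (I I' : Type) (U : I → Set (Set X)) (U' : I' → Set (Set X))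
    (hUV : ∀ i, U i ⊆ V) (hU'V : ∀ i, U' i ⊆ V)
    (hU : ∀ i, MinUBS W (U i)) (hU' : ∀ i, MinUBS W (U' i))
    (hdisj : Pairwise (Function.onFun Disjoint U))
    (hdisj' : Pairwise (Function.onFun Disjoint U'))
    (hae : AlmostEq V (⋃ i, U i)) (hae' : AlmostEq V (⋃ i, U' i)) :
    Finite I ∧ Finite I' ∧ ∃ σ : I ≃ I', ∀ i, AlmostEq (U i) (U' (σ i)) := by
  classical
  have hIfin : Finite I :=
    components_finite hdim hV U hUV (fun i => (hU i).1.2.2.1) (fun i => (hU i).1.2.1) hdisj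
  have hI'fin : Finite I' :=
    components_finite hdim hV U' hU'V (fun i => (hU' i).1.2.2.1) (fun i => (hU' i).1.2.1) hdisj'
  haveI := hIfin
  haveI := hI'fin
  have hUae : ∀ i₁ i₂ : I, AlmostEq (U i₁) (U i₂) → i₁ = i₂ := by
    intro i₁ i₂ h
    by_contra hne
    exact not_almostEq (hdisj hne) (hU i₁).1.2.1 h
  have hU'ae : ∀ j₁ j₂ : I', AlmostEq (U' j₁) (U' j₂) → j₁ = j₂ := by
    intro j₁ j₂ h
    by_contra hne
    exact not_almostEq (hdisj' hne) (hU' j₁).1.2.1 h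
  have hex : ∀ i : I, ∃ j : I', (U i ∩ U' j).Infinite := by
    intro i
    have h1 : (U i \ ⋃ j, U' j).Finite :=
      hae'.1.subset (fun x hx => ⟨hUV i hx.1, hx.2⟩)
    have h2 : (U i ∩ ⋃ j, U' j).Infinite := by
      refine ((hU i).1.2.1.diff h1).mono ?_
      intro x hx
      refine ⟨hx.1, ?_⟩
      by_contra hxx
      exact hx.2 ⟨hx.1, hxx⟩
    rw [Set.inter_iUnion] at h2
    by_contra hno
    push_neg at hno
    exact h2 (Set.finite_iUnion hno)
  have hex' : ∀ j : I', ∃ i : I, (U i ∩ U' j).Infinite := by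
    intro j
    have h1 : (U' j \ ⋃ i, U i).Finite :=
      hae.1.subset (fun x hx => ⟨hU'V j hx.1, hx.2⟩)
    have h2 : (U' j ∩ ⋃ i, U i).Infinite := by
      refine ((hU' j).1.2.1.diff h1).mono ?_
      intro x hx
      refine ⟨hx.1, ?_⟩
      by_contra hxx
      exact hx.2 ⟨hx.1, hxx⟩
    rw [Set.inter_iUnion] at h2
    by_contra hno
    push_neg at hno
    refine h2 (Set.finite_iUnion (fun i => ?_))
    have := hno i
    rwa [Set.inter_comm] at this
  have hkey : ∀ (i : I) (j : I'), (U i ∩ U' j).Infinite → AlmostEq (U i) (U' j) :=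
    fun i j h => min_ae (hU i) (hU' j) h
  choose σf hσf using hex
  choose τf hτf using hex'
  have hστ : ∀ i, τf (σf i) = i := by
    intro i
    apply hUae
    exact almostEq_trans (hkey _ _ (hτf (σf i))) (almostEq_symm (hkey i _ (hσf i)))
  have hτσ : ∀ j, σf (τf j) = j := by
    intro j
    apply hU'ae
    exact almostEq_trans (almostEq_symm (hkey _ _ (hσf (τf j)))) (hkey _ _ (hτf j))
  exact ⟨hIfin, hI'fin, ⟨σf, τf, hστ, hτσ⟩, fun i => hkey i (σf i) (hσf i)⟩
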